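/- For every (e₁,e₂) ∈ ℂ², the product defined on the basis {Aₙ}_{n∈ℤ} of the genus-one Krichever–Novikov function algebra family makes A^(e₁,e₂) a commutative associative unital ℂ-algebra with unit A₀. -/

import Mathlib

open scoped Classical

/-- The product of the genus-one Krichever–Novikov function algebra family
`A^(e₁,e₂)`, on the ℂ-vector space with basis `{Aₙ}_{n∈ℤ}` (modeled as
`ℤ →₀ ℂ` with `Aₙ = Finsupp.single n 1`), extended bilinearly from:
`Aₙ·Aₘ = Aₙ₊ₘ` if `n` or `m` is even, and
`Aₙ·Aₘ = Aₙ₊ₘ + 3e₁Aₙ₊ₘ₋₂ + (e₁−e₂)(2e₁+e₂)Aₙ₊ₘ₋₄` if both `n, m` are odd. -/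
noncomputable def Amul (e₁ e₂ : ℂ) (f g : ℤ →₀ ℂ) : ℤ →₀ ℂ :=
  f.sum fun n a => g.sum fun m b =>
    (a * b) •
      (if Odd n ∧ Odd m then
        Finsupp.single (n + m) 1 + (3 * e₁) • Finsupp.single (n + m - 2) 1
          + ((e₁ - e₂) * (2 * e₁ + e₂)) • Finsupp.single (n + m - 4) 1
       else Finsupp.single (n + m) 1)

noncomputable def KNB (e₁ e₂ : ℂ) (n m : ℤ) : ℤ →₀ ℂ :=
  if Odd n ∧ Odd m then
    Finsupp.single (n + m) 1 + (3 * e₁) • Finsupp.single (n + m - 2) 1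
      + ((e₁ - e₂) * (2 * e₁ + e₂)) • Finsupp.single (n + m - 4) 1
  else Finsupp.single (n + m) 1

lemma Amul_def (e₁ e₂ : ℂ) (f g : ℤ →₀ ℂ) :
    Amul e₁ e₂ f g = f.sum fun n a => g.sum fun m b => (a * b) • KNB e₁ e₂ n m := rfl

lemma Amul_zero (e₁ e₂ : ℂ) (f : ℤ →₀ ℂ) : Amul e₁ e₂ f 0 = 0 := by
  simp [Amul_def]

lemma zero_Amul (e₁ e₂ : ℂ) (f : ℤ →₀ ℂ) : Amul e₁ e₂ 0 f = 0 := by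
  simp [Amul_def]

lemma Amul_add (e₁ e₂ : ℂ) (f g h : ℤ →₀ ℂ) :
    Amul e₁ e₂ f (g + h) = Amul e₁ e₂ f g + Amul e₁ e₂ f h := by
  simp only [Amul_def]
  rw [← Finsupp.sum_add]
  refine Finsupp.sum_congr fun n _ => ?_
  rw [Finsupp.sum_add_index' (by simp) (by intro m b₁ b₂; rw [mul_add, add_smul])]

lemma add_Amul (e₁ e₂ : ℂ) (f g h : ℤ →₀ ℂ) :
    Amul e₁ e₂ (f + g) h = Amul e₁ e₂ f h + Amul e₁ e₂ g h := by
  simp only [Amul_def]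
  rw [Finsupp.sum_add_index' (by simp) ?_]
  intro n a₁ a₂
  rw [← Finsupp.sum_add]
  exact Finsupp.sum_congr fun m _ => by rw [add_mul, add_smul]

lemma single_Amul_single (e₁ e₂ : ℂ) (n m : ℤ) (a b : ℂ) :
    Amul e₁ e₂ (Finsupp.single n a) (Finsupp.single m b) = (a * b) • KNB e₁ e₂ n m := by
  rw [Amul_def, Finsupp.sum_single_index (by simp), Finsupp.sum_single_index (by simp)]

lemma smul_Amul (e₁ e₂ : ℂ) (c : ℂ) (f g : ℤ →₀ ℂ) :
    Amul e₁ e₂ (c • f) g = c • Amul e₁ e₂ f g := by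
  simp only [Amul_def]
  rw [Finsupp.sum_smul_index' (by simp), Finsupp.smul_sum]
  refine Finsupp.sum_congr fun n _ => ?_
  rw [Finsupp.smul_sum]
  exact Finsupp.sum_congr fun m _ => by rw [smul_smul, smul_eq_mul, mul_assoc]

lemma Amul_smul (e₁ e₂ : ℂ) (c : ℂ) (f g : ℤ →₀ ℂ) :
    Amul e₁ e₂ f (c • g) = c • Amul e₁ e₂ f g := by
  simp only [Amul_def]
  rw [Finsupp.smul_sum]
  refine Finsupp.sum_congr fun n a => ?_
  rw [Finsupp.sum_smul_index' (by simp), Finsupp.smul_sum]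
  exact Finsupp.sum_congr fun m b => by rw [smul_smul, smul_eq_mul, mul_left_comm]

lemma KNB_comm (e₁ e₂ : ℂ) (n m : ℤ) : KNB e₁ e₂ n m = KNB e₁ e₂ m n := by
  simp only [KNB, and_comm, add_comm n m]

lemma assoc_single (e₁ e₂ : ℂ) (n m k : ℤ) :
    Amul e₁ e₂ (KNB e₁ e₂ n m) (Finsupp.single k 1)
      = Amul e₁ e₂ (Finsupp.single n 1) (KNB e₁ e₂ m k) := by
  have h2 : ¬ Odd (2:ℤ) := by decide
  have h4 : ¬ Odd (4:ℤ) := by decide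
  by_cases hn : Odd n <;> by_cases hm : Odd m <;> by_cases hk : Odd k <;>
    simp only [KNB, Int.odd_add, Int.odd_sub, ← Int.not_odd_iff_even, hn, hm, hk, h2, h4,
      not_true, not_false_iff, if_true, if_false, iff_true, iff_false,
      true_iff, false_iff, not_not, true_and, and_true, false_and, and_false,
      if_neg, if_pos, ite_true, ite_false] <;>
    simp only [add_Amul, Amul_add, smul_Amul, Amul_smul, single_Amul_single, one_mul,
      one_smul] <;>
    simp only [KNB, Int.odd_add, Int.odd_sub, ← Int.not_odd_iff_even, hn, hm, hk, h2, h4,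
      not_true, not_false_iff, iff_true, iff_false,
      true_iff, false_iff, not_not, true_and, and_true, false_and, and_false,
      ite_true, ite_false] <;>
    ring_nf

lemma assoc_single' (e₁ e₂ : ℂ) (n m k : ℤ) (a b c : ℂ) :
    Amul e₁ e₂ (Amul e₁ e₂ (Finsupp.single n a) (Finsupp.single m b)) (Finsupp.single k c)
      = Amul e₁ e₂ (Finsupp.single n a) (Amul e₁ e₂ (Finsupp.single m b) (Finsupp.single k c)) := by
  have en : (Finsupp.single n a : ℤ →₀ ℂ) = a • Finsupp.single n 1 := by
    rw [Finsupp.smul_single, smul_eq_mul, mul_one]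
  have em : (Finsupp.single m b : ℤ →₀ ℂ) = b • Finsupp.single m 1 := by
    rw [Finsupp.smul_single, smul_eq_mul, mul_one]
  have ek : (Finsupp.single k c : ℤ →₀ ℂ) = c • Finsupp.single k 1 := by
    rw [Finsupp.smul_single, smul_eq_mul, mul_one]
  rw [en, em, ek]
  simp only [smul_Amul, Amul_smul, single_Amul_single, one_mul, one_smul, smul_smul]
  rw [assoc_single]
  ring_nf

lemma Amul_one (e₁ e₂ : ℂ) (f : ℤ →₀ ℂ) : Amul e₁ e₂ f (Finsupp.single 0 1) = f := by
  induction f using Finsupp.induction_linear with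
  | zero => exact zero_Amul e₁ e₂ _
  | add f g hf hg => rw [add_Amul, hf, hg]
  | single n a =>
    rw [single_Amul_single, KNB]
    have : ¬ (Odd n ∧ Odd (0:ℤ)) := by simp [Int.odd_iff]
    rw [if_neg this, add_zero, mul_one, Finsupp.smul_single, smul_eq_mul, mul_one]

lemma Amul_comm (e₁ e₂ : ℂ) (f g : ℤ →₀ ℂ) : Amul e₁ e₂ f g = Amul e₁ e₂ g f := by
  induction f using Finsupp.induction_linear with
  | zero => rw [zero_Amul, Amul_zero]
  | add f₁ f₂ h1 h2 => rw [add_Amul, Amul_add, h1, h2]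
  | single n a =>
    induction g using Finsupp.induction_linear with
    | zero => rw [zero_Amul, Amul_zero]
    | add g₁ g₂ h1 h2 => rw [add_Amul, Amul_add, h1, h2]
    | single m b => rw [single_Amul_single, single_Amul_single, KNB_comm, mul_comm]

lemma Amul_assoc (e₁ e₂ : ℂ) (f g h : ℤ →₀ ℂ) :
    Amul e₁ e₂ (Amul e₁ e₂ f g) h = Amul e₁ e₂ f (Amul e₁ e₂ g h) := by
  induction f using Finsupp.induction_linear with
  | zero => simp only [Amul_zero, zero_Amul]
  | add f₁ f₂ h1 h2 => rw [add_Amul, add_Amul, add_Amul, h1, h2]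
  | single n a =>
    induction g using Finsupp.induction_linear with
    | zero => simp only [Amul_zero, zero_Amul]
    | add g₁ g₂ h1 h2 => rw [Amul_add, add_Amul, add_Amul, Amul_add, h1, h2]
    | single m b =>
      induction h using Finsupp.induction_linear with
      | zero => simp only [Amul_zero, zero_Amul]
      | add h₁ h₂ k1 k2 => rw [Amul_add, Amul_add, Amul_add, k1, k2]
      | single k c => exact assoc_single' e₁ e₂ n m k a b c

/-- For every `(e₁,e₂) ∈ ℂ²`, the product defined on the basis
`{Aₙ}_{n∈ℤ}` of the genus-one Krichever–Novikov function algebra family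
makes `A^(e₁,e₂)` a commutative associative unital ℂ-algebra with unit `A₀`. -/
theorem A_comm_assoc_unital (e₁ e₂ : ℂ) :
    (∀ f g : ℤ →₀ ℂ, Amul e₁ e₂ f g = Amul e₁ e₂ g f) ∧
    (∀ f g h : ℤ →₀ ℂ,
      Amul e₁ e₂ (Amul e₁ e₂ f g) h = Amul e₁ e₂ f (Amul e₁ e₂ g h)) ∧
    (∀ f : ℤ →₀ ℂ, Amul e₁ e₂ (Finsupp.single 0 1) f = f) ∧
    (∀ f : ℤ →₀ ℂ, Amul e₁ e₂ f (Finsupp.single 0 1) = f) := by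
  refine ⟨Amul_comm e₁ e₂, Amul_assoc e₁ e₂, fun f => ?_, Amul_one e₁ e₂⟩
  rw [Amul_comm]; exact Amul_one e₁ e₂ f
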